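/- arXiv:2107.13333 — 3 statements merged into one kernel-verified Lean document; each statement's English description precedes it below -/
import Mathlib

section
/- The function g(x,y) = x*y/(x+y-U*y), for a fixed constant U with 0 < U ≤ 1, is concave on the domain {(x,y) : 0 < x ≤ U, 0 < y ≤ 1}. Specifically, its Hessian equals (2(1-U)/(x+y-U*y)^3) * [[-y^2, xy],[xy, -x^2]], which is negative semidefinite on this domain. -/
open Matrix

private lemma hasDerivAt_gx (U x y : ℝ) (hD : x + y - U * y ≠ 0) :
    HasDerivAt (fun x'' => x'' * y / (x'' + y - U * y))
      ((1 - U) * y ^ 2 / (x + y - U * y) ^ 2) x := by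
  have h1 : HasDerivAt (fun x'' : ℝ => x'' * y) y x := by
    simpa using (hasDerivAt_id x).mul_const y
  have h2 : HasDerivAt (fun x'' : ℝ => x'' + y - U * y) 1 x := by
    simpa using ((hasDerivAt_id x).add_const y).sub_const (U * y)
  have := h1.fun_div h2 hD
  exact this.congr_deriv (by ring)

private lemma hasDerivAt_gy (U x y : ℝ) (hD : x + y - U * y ≠ 0) :
    HasDerivAt (fun y'' => x * y'' / (x + y'' - U * y''))
      (x ^ 2 / (x + y - U * y) ^ 2) y := by
  have h1 : HasDerivAt (fun y'' : ℝ => x * y'') x y := by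
    simpa using (hasDerivAt_id y).const_mul x
  have h2 : HasDerivAt (fun y'' : ℝ => x + y'' - U * y'') (1 - U) y := by
    have : HasDerivAt (fun y'' : ℝ => x + y'' - U * y'') (0 + 1 - U * 1) y :=
      ((hasDerivAt_const y x).add (hasDerivAt_id y)).sub ((hasDerivAt_id y).const_mul U)
    simpa using this
  have := h1.fun_div h2 hD
  exact this.congr_deriv (by ring)

/-- For a fixed `U ∈ (0,1]`, the function `g(x,y) = xy/(x+y-Uy)` is concave on
`{(x,y) : 0 < x ≤ U, 0 < y ≤ 1}`; its second-order partial derivatives form the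
Hessian `(2(1-U)/(x+y-Uy)^3) * [[-y², xy],[xy, -x²]]`, which is negative
semidefinite on this domain. -/
theorem stmt_2 (U : ℝ) (hU0 : 0 < U) (hU1 : U ≤ 1) :
    ConcaveOn ℝ {p : ℝ × ℝ | 0 < p.1 ∧ p.1 ≤ U ∧ 0 < p.2 ∧ p.2 ≤ 1}
      (fun p => p.1 * p.2 / (p.1 + p.2 - U * p.2)) ∧
    (∀ x y : ℝ, 0 < x → x ≤ U → 0 < y → y ≤ 1 →
      (deriv (fun x' => deriv (fun x'' => x'' * y / (x'' + y - U * y)) x') x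
          = 2 * (1 - U) / (x + y - U * y) ^ 3 * (-(y ^ 2)) ∧
       deriv (fun y' => deriv (fun x'' => x'' * y' / (x'' + y' - U * y')) x) y
          = 2 * (1 - U) / (x + y - U * y) ^ 3 * (x * y) ∧
       deriv (fun x' => deriv (fun y'' => x' * y'' / (x' + y'' - U * y'')) y) x
          = 2 * (1 - U) / (x + y - U * y) ^ 3 * (x * y) ∧
       deriv (fun y' => deriv (fun y'' => x * y'' / (x + y'' - U * y'')) y') y
          = 2 * (1 - U) / (x + y - U * y) ^ 3 * (-(x ^ 2))) ∧
      ∀ v : Fin 2 → ℝ,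
        v ⬝ᵥ (((2 * (1 - U) / (x + y - U * y) ^ 3) •
          Matrix.of ![![-(y ^ 2), x * y], ![x * y, -(x ^ 2)]]).mulVec v) ≤ 0) := by
  constructor
  · -- Concavity
    refine ⟨?_, ?_⟩
    · have : {p : ℝ × ℝ | 0 < p.1 ∧ p.1 ≤ U ∧ 0 < p.2 ∧ p.2 ≤ 1}
          = Set.Ioc (0:ℝ) U ×ˢ Set.Ioc (0:ℝ) 1 := by
        ext p; simp [Set.mem_Ioc, and_assoc]
      rw [this]
      exact (convex_Ioc 0 U).prod (convex_Ioc 0 1)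
    · rintro ⟨x1, y1⟩ ⟨hx1, hx1U, hy1, hy11⟩ ⟨x2, y2⟩ ⟨hx2, hx2U, hy2, hy21⟩
        a b ha hb hab
      simp only [Prod.smul_mk, Prod.mk_add_mk, smul_eq_mul]
      have hD1 : 0 < x1 + y1 - U * y1 := by nlinarith
      have hD2 : 0 < x2 + y2 - U * y2 := by nlinarith
      have hb' : b = 1 - a := by linarith
      subst hb'
      have hX : 0 < a * x1 + (1 - a) * x2 := by
        rcases ha.lt_or_eq with h | h
        · nlinarith [mul_nonneg hb hx2.le, mul_pos h hx1]
        · rw [← h]; simpa using hx2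
      have hY : 0 ≤ a * y1 + (1 - a) * y2 := by nlinarith
      have hD : 0 < (a * x1 + (1 - a) * x2) + (a * y1 + (1 - a) * y2)
          - U * (a * y1 + (1 - a) * y2) := by
        nlinarith [mul_nonneg (by linarith : (0:ℝ) ≤ 1 - U) hY]
      rw [mul_div_assoc', mul_div_assoc',
        div_add_div _ _ (ne_of_gt hD1) (ne_of_gt hD2),
        div_le_div_iff₀ (by positivity) hD]
      have key : (a * x1 + (1 - a) * x2) * (a * y1 + (1 - a) * y2) *
            ((x1 + y1 - U * y1) * (x2 + y2 - U * y2))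
          - (a * (x1 * y1) * (x2 + y2 - U * y2)
              + (1 - a) * (x2 * y2) * (x1 + y1 - U * y1)) *
            ((a * x1 + (1 - a) * x2) + (a * y1 + (1 - a) * y2)
              - U * (a * y1 + (1 - a) * y2))
          = (1 - U) * a * (1 - a) * (x1 * y2 - x2 * y1) ^ 2 := by ring
      nlinarith [key, mul_nonneg (mul_nonneg (mul_nonneg
        (by linarith : (0:ℝ) ≤ 1 - U) ha) hb) (sq_nonneg (x1 * y2 - x2 * y1))]
  · intro x y hx hxU hy hy1
    have hc : (0:ℝ) ≤ 1 - U := by linarith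
    have hD : 0 < x + y - U * y := by nlinarith
    have hDne : x + y - U * y ≠ 0 := ne_of_gt hD
    constructor
    · refine ⟨?_, ?_, ?_, ?_⟩
      · -- ∂²/∂x²
        have hev : (fun x' => deriv (fun x'' => x'' * y / (x'' + y - U * y)) x')
            =ᶠ[nhds x] fun x' => (1 - U) * y ^ 2 / (x' + y - U * y) ^ 2 := by
          have hcont : ContinuousAt (fun x' : ℝ => x' + y - U * y) x := by fun_prop
          filter_upwards [hcont.eventually_ne hDne] with x' hx'
          exact (hasDerivAt_gx U x' y hx').deriv
        rw [hev.deriv_eq]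
        have h2 : HasDerivAt (fun x' : ℝ => x' + y - U * y) 1 x := by
          simpa using ((hasDerivAt_id x).add_const y).sub_const (U * y)
        have h3 : HasDerivAt (fun x' : ℝ => (x' + y - U * y) ^ 2)
            (2 * (x + y - U * y) ^ 1 * 1) x := h2.pow 2
        have h4 := (hasDerivAt_const x ((1 - U) * y ^ 2)).fun_div h3 (by positivity)
        rw [h4.deriv]
        field_simp
        ring
      · -- ∂²/∂y∂x
        have hev : (fun y' => deriv (fun x'' => x'' * y' / (x'' + y' - U * y')) x)
            =ᶠ[nhds y] fun y' => (1 - U) * y' ^ 2 / (x + y' - U * y') ^ 2 := by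
          have hcont : ContinuousAt (fun y' : ℝ => x + y' - U * y') y := by fun_prop
          filter_upwards [hcont.eventually_ne hDne] with y' hy'
          exact (hasDerivAt_gx U x y' hy').deriv
        rw [hev.deriv_eq]
        have h1 : HasDerivAt (fun y' : ℝ => (1 - U) * y' ^ 2)
            ((1 - U) * (2 * y ^ 1 * 1)) y := ((hasDerivAt_id y).pow 2).const_mul _
        have h2 : HasDerivAt (fun y' : ℝ => x + y' - U * y') (1 - U) y := by
          have : HasDerivAt (fun y' : ℝ => x + y' - U * y') (0 + 1 - U * 1) y :=
            ((hasDerivAt_const y x).add (hasDerivAt_id y)).sub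
              ((hasDerivAt_id y).const_mul U)
          simpa using this
        have h3 : HasDerivAt (fun y' : ℝ => (x + y' - U * y') ^ 2)
            (2 * (x + y - U * y) ^ 1 * (1 - U)) y := h2.pow 2
        have h4 := h1.fun_div h3 (by positivity)
        rw [h4.deriv]
        field_simp
        ring
      · -- ∂²/∂x∂y
        have hev : (fun x' => deriv (fun y'' => x' * y'' / (x' + y'' - U * y'')) y)
            =ᶠ[nhds x] fun x' => x' ^ 2 / (x' + y - U * y) ^ 2 := by
          have hcont : ContinuousAt (fun x' : ℝ => x' + y - U * y) x := by fun_prop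
          filter_upwards [hcont.eventually_ne hDne] with x' hx'
          exact (hasDerivAt_gy U x' y hx').deriv
        rw [hev.deriv_eq]
        have h1 : HasDerivAt (fun x' : ℝ => x' ^ 2) (2 * x ^ 1 * 1) x :=
          (hasDerivAt_id x).pow 2
        have h2 : HasDerivAt (fun x' : ℝ => x' + y - U * y) 1 x := by
          simpa using ((hasDerivAt_id x).add_const y).sub_const (U * y)
        have h3 : HasDerivAt (fun x' : ℝ => (x' + y - U * y) ^ 2)
            (2 * (x + y - U * y) ^ 1 * 1) x := h2.pow 2
        have h4 := h1.fun_div h3 (by positivity)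
        rw [h4.deriv]
        field_simp
        ring
      · -- ∂²/∂y²
        have hev : (fun y' => deriv (fun y'' => x * y'' / (x + y'' - U * y'')) y')
            =ᶠ[nhds y] fun y' => x ^ 2 / (x + y' - U * y') ^ 2 := by
          have hcont : ContinuousAt (fun y' : ℝ => x + y' - U * y') y := by fun_prop
          filter_upwards [hcont.eventually_ne hDne] with y' hy'
          exact (hasDerivAt_gy U x y' hy').deriv
        rw [hev.deriv_eq]
        have h2 : HasDerivAt (fun y' : ℝ => x + y' - U * y') (1 - U) y := by
          have : HasDerivAt (fun y' : ℝ => x + y' - U * y') (0 + 1 - U * 1) y :=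
            ((hasDerivAt_const y x).add (hasDerivAt_id y)).sub
              ((hasDerivAt_id y).const_mul U)
          simpa using this
        have h3 : HasDerivAt (fun y' : ℝ => (x + y' - U * y') ^ 2)
            (2 * (x + y - U * y) ^ 1 * (1 - U)) y := h2.pow 2
        have h4 := (hasDerivAt_const y (x ^ 2)).fun_div h3 (by positivity)
        rw [h4.deriv]
        field_simp
        ring
    · intro v
      have hk : (0:ℝ) ≤ 2 * (1 - U) / (x + y - U * y) ^ 3 := by positivity
      simp only [dotProduct, Matrix.mulVec, Matrix.smul_apply,
        Fin.sum_univ_two, Matrix.of_apply, Matrix.cons_val', Matrix.cons_val_zero,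
        Matrix.cons_val_one, Matrix.head_cons, Matrix.empty_val',
        Matrix.cons_val_fin_one, Matrix.head_fin_const, smul_eq_mul,
        Pi.smul_apply]
      nlinarith [mul_nonneg hk (sq_nonneg (y * v 0 - x * v 1))]
end

section
/- Tangent-plane cut validity: for U_x ∈ (0,1], any point (x*,y*) with x* ∈ (0,U_x], y* > 0, and any (x,y) with x ∈ (0,U_x], y > 0, the concave function g(x,y) = xy/(x+y-U_x·y) satisfies g(x,y) ≤ (y*/(x*+y*-U_x·y*))²·(1-U_x)·x + (x*/(x*+y*-U_x·y*))²·y. -/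
/-- Tangent-plane cut validity for `g(x,y) = xy/(x+y-Uₓy)`. -/
theorem stmt_13 (Ux xs ys x y : ℝ) (hUx0 : 0 < Ux) (hUx1 : Ux ≤ 1)
    (hxs0 : 0 < xs) (hxs : xs ≤ Ux) (hys : 0 < ys)
    (hx0 : 0 < x) (hx : x ≤ Ux) (hy : 0 < y) :
    x * y / (x + y - Ux * y) ≤
      (ys / (xs + ys - Ux * ys)) ^ 2 * (1 - Ux) * x +
      (xs / (xs + ys - Ux * ys)) ^ 2 * y := by
  have hd : 0 < x + y - Ux * y := by nlinarith
  have hds : 0 < xs + ys - Ux * ys := by nlinarith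
  have h2 : (0:ℝ) < (xs + ys - Ux * ys) ^ 2 := by positivity
  rw [div_le_iff₀ hd, div_pow, div_pow, div_mul_eq_mul_div, div_mul_eq_mul_div, div_mul_eq_mul_div,
    ← add_div, div_mul_eq_mul_div, le_div_iff₀ h2]
  nlinarith [mul_nonneg (sub_nonneg.mpr hUx1) (sq_nonneg (x * ys - xs * y))]
end

section
/- Lower-bound tangent cut validity: for constants 0 < L_x ≤ U_x ≤ 1, 0 < L_y ≤ U_y ≤ 1, and all (x,y) ∈ [L_x,U_x] × [L_y,U_y], the function f₃(x,y) = xy/(x+y-xy) satisfies f₃(x,y) ≤ (L_y²/(L_x+L_y-L_x·L_y)²)·(x-L_x) + (U_x²/(U_x+L_y-U_x·L_y)²)·(y-L_y) + L_x·L_y/(L_x+L_y-L_x·L_y). -/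
/-- Lower-bound tangent cut validity for `f₃(x,y) = xy/(x+y-xy)`. -/
theorem stmt_17 (Lx Ux Ly Uy x y : ℝ)
    (hLx : 0 < Lx) (hLUx : Lx ≤ Ux) (hUx : Ux ≤ 1)
    (hLy : 0 < Ly) (hLUy : Ly ≤ Uy) (hUy : Uy ≤ 1)
    (hxL : Lx ≤ x) (hxU : x ≤ Ux) (hyL : Ly ≤ y) (hyU : y ≤ Uy) :
    x * y / (x + y - x * y) ≤
      (Ly ^ 2 / (Lx + Ly - Lx * Ly) ^ 2) * (x - Lx) +
      (Ux ^ 2 / (Ux + Ly - Ux * Ly) ^ 2) * (y - Ly) +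
      Lx * Ly / (Lx + Ly - Lx * Ly) := by
  have hx0 : 0 < x := lt_of_lt_of_le hLx hxL
  have hy0 : 0 < y := lt_of_lt_of_le hLy hyL
  have hx1 : x ≤ 1 := le_trans hxU hUx
  have hy1 : y ≤ 1 := le_trans hyU hUy
  have hB : 0 < Lx + Ly - Lx * Ly := by nlinarith
  have hC : 0 < Ux + Ly - Ux * Ly := by nlinarith
  have hd : 0 < x + y - x * y := by nlinarith
  have hdL : 0 < x + Ly - x * Ly := by nlinarith
  -- Step 1: f(x,y) ≤ f(x,Ly) + (Ux²/C²)(y-Ly)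
  have step1 : x * y / (x + y - x * y) ≤
      x * Ly / (x + Ly - x * Ly) + Ux ^ 2 / (Ux + Ly - Ux * Ly) ^ 2 * (y - Ly) := by
    have hdiff : x * y / (x + y - x * y) - x * Ly / (x + Ly - x * Ly)
        = x ^ 2 * (y - Ly) / ((x + y - x * y) * (x + Ly - x * Ly)) := by
      field_simp
      ring
    have hbound : x ^ 2 * (y - Ly) / ((x + y - x * y) * (x + Ly - x * Ly))
        ≤ Ux ^ 2 * (y - Ly) / (Ux + Ly - Ux * Ly) ^ 2 := by
      rw [div_le_div_iff₀ (by positivity) (by positivity)]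
      have h1 : x * (Ux + Ly - Ux * Ly) ≤ Ux * (x + Ly - x * Ly) := by nlinarith
      have h2 : x + Ly - x * Ly ≤ x + y - x * y := by nlinarith
      have h3 : x + Ly - x * Ly ≤ Ux + Ly - Ux * Ly := by nlinarith
      nlinarith [mul_le_mul h1 h1 (mul_pos hx0 hC).le (mul_pos (hLx.trans_le hLUx) hdL).le,
        mul_nonneg (sub_nonneg.mpr hyL) (mul_pos hx0 hx0).le,
        mul_le_mul_of_nonneg_left h2 (mul_nonneg (sq_nonneg Ux) (sub_nonneg.mpr hyL)),
        sq_nonneg x, sub_nonneg.mpr hyL]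
    have : Ux ^ 2 * (y - Ly) / (Ux + Ly - Ux * Ly) ^ 2
        = Ux ^ 2 / (Ux + Ly - Ux * Ly) ^ 2 * (y - Ly) := by ring
    linarith [hdiff ▸ hbound, this ▸ hbound]
  -- Step 2: tangent-line (concavity) bound in x at Lx with y = Ly
  have step2 : x * Ly / (x + Ly - x * Ly) ≤
      Ly ^ 2 / (Lx + Ly - Lx * Ly) ^ 2 * (x - Lx) + Lx * Ly / (Lx + Ly - Lx * Ly) := by
    have key : Ly ^ 2 / (Lx + Ly - Lx * Ly) ^ 2 * (x - Lx) + Lx * Ly / (Lx + Ly - Lx * Ly)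
        - x * Ly / (x + Ly - x * Ly)
        = Ly ^ 2 * (1 - Ly) * (x - Lx) ^ 2 / ((Lx + Ly - Lx * Ly) ^ 2 * (x + Ly - x * Ly)) := by
      rw [div_mul_eq_mul_div, div_add_div _ _ (by positivity) (by positivity), div_sub_div _ _ (by positivity) (by positivity), div_eq_div_iff (by positivity) (by positivity)]
      ring
    have hpos : 0 ≤ Ly ^ 2 * (1 - Ly) * (x - Lx) ^ 2 / ((Lx + Ly - Lx * Ly) ^ 2 * (x + Ly - x * Ly)) := by
      have : (0:ℝ) ≤ 1 - Ly := by linarith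
      positivity
    linarith [key ▸ hpos]
  linarith
end
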